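/- Consider the environment E with a single agent 1, actions Acts_1 = {a, b, skip}, states S = {s₀, s₁, s₂}, initial states I = {s₀}, observation O_1(s) = s for every s, and transition relation: s₀ →^a s₁, s₀ →^b s₂, s₁ →^a s₁, s₁ →^b s₁, s₂ →^a s₂, s₂ →^b s₂, and s →^{skip} s for every s. Let P be the protocol template do x → a [] ¬x → b od for agent 1 (x a template variable), and let θ be the empty partial substitution. Define the top strategy σ_⊤ by σ_⊤(s₀…s_k) = {t : s_k →^α t for some action α ∈ Acts_1}. Then for every memory definition μ, the strategy σ_⊤ is not substitution consistent with respect to P, θ and μ. -/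

import Mathlib

namespace EpiSyn

/-- Syntax of CTL*K over atomic propositions `P` and agents `A`. -/
inductive Formula (P A : Type) : Type
  | atom  : P → Formula P A
  | neg   : Formula P A → Formula P A
  | or    : Formula P A → Formula P A → Formula P A
  | next  : Formula P A → Formula P A
  | untl  : Formula P A → Formula P A → Formula P A
  | all   : Formula P A → Formula P A
  | know  : A → Formula P A → Formula P A

/-- An interpreted system over global states `S`: a set of runs, an
indistinguishability relation on points for each agent (an equivalence
relation on points of the system), and an interpretation of propositions. -/
structure IS (S P A : Type) where
  runs : Set (ℕ → S)
  sim  : A → ((ℕ → S) × ℕ) → ((ℕ → S) × ℕ) → Prop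
  intp : S → Set P
  sim_refl : ∀ i r m, r ∈ runs → sim i (r, m) (r, m)
  sim_symm : ∀ i p q, p.1 ∈ runs → q.1 ∈ runs → sim i p q → sim i q p
  sim_trans : ∀ i p q u, p.1 ∈ runs → q.1 ∈ runs → u.1 ∈ runs →
      sim i p q → sim i q u → sim i p u

variable {S P A : Type}

/-- Bundle semantics of CTL*K at a point `(r, m)` of an interpreted system. -/
def sat (I : IS S P A) : Formula P A → (ℕ → S) → ℕ → Prop
  | .atom p, r, m => p ∈ I.intp (r m)
  | .neg φ, r, m => ¬ sat I φ r m
  | .or φ ψ, r, m => sat I φ r m ∨ sat I ψ r m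
  | .next φ, r, m => sat I φ r (m + 1)
  | .untl φ ψ, r, m =>
      ∃ m', m ≤ m' ∧ sat I ψ r m' ∧ ∀ k, m ≤ k → k < m' → sat I φ r k
  | .all φ, r, m => ∀ r' ∈ I.runs, (∀ k, k ≤ m → r' k = r k) → sat I φ r' m
  | .know i φ, r, m => ∀ r' ∈ I.runs, ∀ m', I.sim i (r', m') (r, m) → sat I φ r' m'

/-- `I ⊨ φ` : satisfaction at time `0` of every run. -/
def valid (I : IS S P A) (φ : Formula P A) : Prop := ∀ r ∈ I.runs, sat I φ r 0

/-- `I ⊆ I'` : same states and interpretation, fewer runs, and the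
indistinguishability relations of `I` are the restrictions of those of `I'`. -/
def Subsystem (I I' : IS S P A) : Prop :=
  I.runs ⊆ I'.runs ∧ I.intp = I'.intp ∧
  ∀ (i : A) (r : ℕ → S) (m : ℕ) (r' : ℕ → S) (m' : ℕ), r ∈ I.runs → r' ∈ I.runs →
    (I.sim i (r, m) (r', m') ↔ I'.sim i (r, m) (r', m'))

/-- `okPol φ b` : when `φ` occurs in a context of polarity `b`
(`true` = under an even number of negations), every occurrence of a
knowledge operator or of the branching operator `all` in `φ` is in
positive position (under an even number of negations overall). -/
def okPol : Formula P A → Bool → Prop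
  | .atom _, _ => True
  | .neg φ, b => okPol φ (!b)
  | .or φ ψ, b => okPol φ b ∧ okPol ψ b
  | .next φ, b => okPol φ b
  | .untl φ ψ, b => okPol φ b ∧ okPol ψ b
  | .all φ, b => b = true ∧ okPol φ b
  | .know _ φ, b => b = true ∧ okPol φ b

/-- Every occurrence of a knowledge operator `K_i` and of the branching
operator `A` in `φ` is in positive position. -/
def Positive (φ : Formula P A) : Prop := okPol φ true

/-- Derived operators. -/
def Formula.and (φ ψ : Formula P A) : Formula P A := .neg (.or (.neg φ) (.neg ψ))

def Formula.imp (φ ψ : Formula P A) : Formula P A := .or (.neg φ) ψ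

def Formula.iff (φ ψ : Formula P A) : Formula P A := Formula.and (φ.imp ψ) (ψ.imp φ)

/-- The truth constant, expressed in the base syntax. -/
def ttF [Inhabited P] : Formula P A := .or (.atom default) (.neg (.atom default))

/-- `F φ = true U φ`. -/
def Ff [Inhabited P] (φ : Formula P A) : Formula P A := .untl ttF φ

/-- `G φ = ¬ F ¬ φ`. -/
def Gf [Inhabited P] (φ : Formula P A) : Formula P A := .neg (Ff (.neg φ))

/-- `AG φ = A (G φ)`. -/
def AGf [Inhabited P] (φ : Formula P A) : Formula P A := .all (Gf φ)

/-- `AX φ = A (X φ)`. -/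
def AXf (φ : Formula P A) : Formula P A := .all (.next φ)

/-- The fragment CTLK⁺. -/
inductive CTLKp (P A : Type) : Type
  | atom : P → CTLKp P A
  | natom : P → CTLKp P A
  | or : CTLKp P A → CTLKp P A → CTLKp P A
  | and : CTLKp P A → CTLKp P A → CTLKp P A
  | ax : CTLKp P A → CTLKp P A
  | af : CTLKp P A → CTLKp P A
  | ag : CTLKp P A → CTLKp P A
  | au : CTLKp P A → CTLKp P A → CTLKp P A
  | ar : CTLKp P A → CTLKp P A → CTLKp P A
  | know : A → CTLKp P A → CTLKp P A

/-- Expansion of a CTLK⁺ formula into the base CTL*K syntax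
(`AX φ = A X φ`, `AF φ = A (true U φ)`, `AG φ = A ¬(true U ¬φ)`,
`A(φ R ψ) = A ¬((¬φ) U (¬ψ))`, `φ ∧ ψ = ¬(¬φ ∨ ¬ψ)`). -/
def CTLKp.toFormula [Inhabited P] : CTLKp P A → Formula P A
  | .atom p => .atom p
  | .natom p => .neg (.atom p)
  | .or φ ψ => .or φ.toFormula ψ.toFormula
  | .and φ ψ => Formula.and φ.toFormula ψ.toFormula
  | .ax φ => .all (.next φ.toFormula)
  | .af φ => .all (Ff φ.toFormula)
  | .ag φ => .all (Gf φ.toFormula)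
  | .au φ ψ => .all (.untl φ.toFormula ψ.toFormula)
  | .ar φ ψ => .all (.neg (.untl (.neg φ.toFormula) (.neg ψ.toFormula)))
  | .know i φ => .know i φ.toFormula

/-- `φ` is (the expansion of) a formula of the fragment CTLK⁺. -/
def InCTLKplus [Inhabited P] (φ : Formula P A) : Prop :=
  ∃ c : CTLKp P A, c.toFormula = φ

/-- Boolean (purely propositional) formulas. -/
inductive BForm (P : Type) : Type
  | atom : P → BForm P
  | neg : BForm P → BForm P
  | or : BForm P → BForm P → BForm P

/-- Truth of a boolean formula under an assignment (set of true propositions). -/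
def BForm.eval (v : Set P) : BForm P → Prop
  | .atom p => p ∈ v
  | .neg φ => ¬ φ.eval v
  | .or φ ψ => φ.eval v ∨ ψ.eval v

/-- The atomic propositions occurring in a boolean formula. -/
def BForm.atoms : BForm P → Set P
  | .atom p => {p}
  | .neg φ => φ.atoms
  | .or φ ψ => φ.atoms ∪ ψ.atoms

/-- A boolean formula regarded as a CTL*K formula. -/
def BForm.toFormula : BForm P → Formula P A
  | .atom p => .atom p
  | .neg φ => .neg φ.toFormula
  | .or φ ψ => .or φ.toFormula ψ.toFormula

/-- The falsum constant `¬(p ∨ ¬p)`, expressed as a boolean formula. -/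
def ffB [Inhabited P] : BForm P := .neg (.or (.atom default) (.neg (.atom default)))

/-- Conjunction of boolean formulas. -/
def bAnd (φ ψ : BForm P) : BForm P := .neg (.or (.neg φ) (.neg ψ))

end EpiSyn
namespace EpiSyn

variable {S P A Act Obs X : Type}

/-- An environment: initial states, a set of actions for each agent
(containing `skip`), a serial transition relation labelled by joint actions
(with the all-`skip` joint action acting as identity), an observation
function for each agent, and an interpretation of atomic propositions. -/
structure Env (S P A Act Obs : Type) where
  init : Set S
  acts : A → Set Act
  skip : Act
  skip_mem : ∀ i, skip ∈ acts i
  tr : S → (A → Act) → S → Prop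
  serial : ∀ s (a : A → Act), (∀ i, a i ∈ acts i) → ∃ t, tr s a t
  skip_loop : ∀ s t, tr s (fun _ => skip) t ↔ s = t
  obs : A → S → Obs
  intp : S → Set P

/-- Proposition `p` is local to agent `i`: its truth depends only on `i`'s observation. -/
def LocalProp (E : Env S P A Act Obs) (i : A) (p : P) : Prop :=
  ∀ s t, E.obs i s = E.obs i t → (p ∈ E.intp s ↔ p ∈ E.intp t)

/-- A boolean formula is local to agent `i` if all its propositions are. -/
def LocalBForm (E : Env S P A Act Obs) (i : A) (φ : BForm P) : Prop :=
  ∀ p ∈ φ.atoms, LocalProp E i p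

/-- A concrete protocol for one agent: a finite list of guarded clauses `φ → a`. -/
abbrev Proto (P Act : Type) := List (BForm P × Act)

/-- Well-formedness of a joint concrete protocol: clause actions belong to the
agent's action set and guards are local to the agent. -/
def ProtocolWF (E : Env S P A Act Obs) (Q : A → Proto P Act) : Prop :=
  ∀ i, ∀ c ∈ Q i, c.2 ∈ E.acts i ∧ LocalBForm E i c.1

/-- The set of actions enabled by protocol `Pi` at state `s`: the actions of
clauses whose guard holds at `s`; if no guard holds, just `skip`. -/
def en (E : Env S P A Act Obs) (Pi : Proto P Act) (s : S) : Set Act :=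
  {α | (∃ c ∈ Pi, c.2 = α ∧ c.1.eval (E.intp s)) ∨
       (α = E.skip ∧ ∀ c ∈ Pi, ¬ c.1.eval (E.intp s))}

/-- Runs of the joint protocol `Q` in the environment `E`. -/
def sysRuns (E : Env S P A Act Obs) (Q : A → Proto P Act) : Set (ℕ → S) :=
  {r | r 0 ∈ E.init ∧
    ∀ n, ∃ a : A → Act, (∀ i, a i ∈ en E (Q i) (r n)) ∧ E.tr (r n) a (r (n + 1))}

/-- The interpreted system `𝓘(E, Q)` generated by running joint protocol `Q`
in environment `E`, with the observational semantics for knowledge. -/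
def sysIS (E : Env S P A Act Obs) (Q : A → Proto P Act) : IS S P A where
  runs := sysRuns E Q
  sim := fun i p q => E.obs i (p.1 p.2) = E.obs i (q.1 q.2)
  intp := E.intp
  sim_refl := fun _ _ _ _ => rfl
  sim_symm := fun _ _ _ _ _ h => h.symm
  sim_trans := fun _ _ _ _ _ _ _ h h' => h.trans h'

/-- A protocol template for one agent: guards are boolean formulas over the
atomic propositions together with boolean template variables from `X`. -/
abbrev ProtoT (P X Act : Type) := List (BForm (P ⊕ X) × Act)

/-- Well-formedness of a joint protocol template with variable-ownership map
`owner`: clause actions belong to the agent's action set, the atomic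
propositions in guards of agent `i`'s template are local to `i`, and the
template variables occurring in it are owned by `i` (so the variable sets of
distinct agents are disjoint). -/
def TemplateWF (E : Env S P A Act Obs) (owner : X → A)
    (Pt : A → ProtoT P X Act) : Prop :=
  ∀ i, ∀ c ∈ Pt i, c.2 ∈ E.acts i ∧
    ∀ q ∈ c.1.atoms, Sum.elim (fun p => LocalProp E i p) (fun x => owner x = i) q

/-- Application of a (total) substitution to a template guard. -/
def substB (θ : X → BForm P) : BForm (P ⊕ X) → BForm P
  | .atom (.inl p) => .atom p
  | .atom (.inr x) => θ x
  | .neg φ => .neg (substB θ φ)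
  | .or φ ψ => .or (substB θ φ) (substB θ ψ)

/-- Application of a (total) substitution to a joint protocol template,
yielding a joint concrete protocol `Pθ`. -/
def substT (θ : X → BForm P) (Pt : A → ProtoT P X Act) : A → Proto P Act :=
  fun i => (Pt i).map (fun c => (substB θ c.1, c.2))

/-- Application of a (total) substitution to a CTL*K formula over `Prop ∪ X`. -/
def substF (θ : X → BForm P) : Formula (P ⊕ X) A → Formula P A
  | .atom (.inl p) => .atom p
  | .atom (.inr x) => (θ x).toFormula
  | .neg φ => .neg (substF θ φ)
  | .or φ ψ => .or (substF θ φ) (substF θ ψ)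
  | .next φ => .next (substF θ φ)
  | .untl φ ψ => .untl (substF θ φ) (substF θ ψ)
  | .all φ => .all (substF θ φ)
  | .know i φ => .know i (substF θ φ)

/-- A total substitution is well-formed if it assigns to each template
variable a boolean formula local to the agent owning that variable. -/
def SubstWF (E : Env S P A Act Obs) (owner : X → A) (θ : X → BForm P) : Prop :=
  ∀ x, LocalBForm E (owner x) (θ x)

/-- A partial substitution is well-formed if every assigned formula is local
to the agent owning the corresponding variable. -/
def PSubstWF (E : Env S P A Act Obs) (owner : X → A) (θ : X → Option (BForm P)) : Prop :=
  ∀ x b, θ x = some b → LocalBForm E (owner x) b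

end EpiSyn
namespace EpiSyn

variable {S P A Act Obs X : Type}

/-- A strategy for environment `E`: maps each nonempty sequence of states
(represented as a proper prefix `pre` together with the last state `s`)
to a nonempty set of possible successor states, each reachable from the
last state by some joint action. -/
structure Strategy (E : Env S P A Act Obs) where
  next : List S → S → Set S
  nonemp : ∀ pre s, (next pre s).Nonempty
  tr_ok : ∀ pre s t, t ∈ next pre s →
      ∃ a : A → Act, (∀ i, a i ∈ E.acts i) ∧ E.tr s a t

/-- A memory definition: for each agent, a function on nonempty sequences of
states (represented as prefix and last state). -/
structure MemoryDef (S A : Type) where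
  M : A → Type
  mem : (i : A) → List S → S → M i

/-- The strategy `σ` depends on the memory definition `μ`: there are functions
`F i : range (μ i) → 𝒫(Acts i)` such that the possible successors after a
sequence are exactly the states reached by joint actions whose components are
selected by the `F i` applied to the agents' memories of the sequence. -/
def DependsOn (E : Env S P A Act Obs) (σ : Strategy E) (μ : MemoryDef S A) : Prop :=
  ∃ F : (i : A) → μ.M i → Set Act,
    (∀ i m, F i m ⊆ E.acts i) ∧
    ∀ pre s t, t ∈ σ.next pre s ↔
      ∃ a : A → Act, E.tr s a t ∧ ∀ i, a i ∈ F i (μ.mem i pre s)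

/-- Truth of a template guard at assignment `val`, where a partial
substitution `θ` interprets some template variables as boolean formulas and
the completion `v` assigns truth values to the remaining ones. -/
def evalT (val : Set P) (θ : X → Option (BForm P)) (v : X → Bool) :
    BForm (P ⊕ X) → Prop
  | .atom (.inl p) => p ∈ val
  | .atom (.inr x) =>
      match θ x with
      | some b => b.eval val
      | none => v x = true
  | .neg φ => ¬ evalT val θ v φ
  | .or φ ψ => evalT val θ v φ ∨ evalT val θ v ψ

/-- Actions enabled at `s` by agent `i`'s protocol template under the partial
substitution `θ` completed by the truth-value assignment `v`. -/
def enT (E : Env S P A Act Obs) (Pi : ProtoT P X Act)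
    (θ : X → Option (BForm P)) (v : X → Bool) (s : S) : Set Act :=
  {α | (∃ c ∈ Pi, c.2 = α ∧ evalT (E.intp s) θ v c.1) ∨
       (α = E.skip ∧ ∀ c ∈ Pi, ¬ evalT (E.intp s) θ v c.1)}

/-- `σ` is substitution consistent with respect to the joint protocol
template `Pt`, the partial substitution `θ` and the memory definition `μ`:
`σ` depends on `μ` and, for every sequence, there is an extension `θ'` of `θ`
assigning truth values to the template variables on which `θ` is undefined
such that the successors prescribed by `σ` are exactly those reached by
joint actions enabled by `Pθ'` at the last state. -/
def SubstConsistent (E : Env S P A Act Obs) (Pt : A → ProtoT P X Act)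
    (θ : X → Option (BForm P)) (σ : Strategy E) (μ : MemoryDef S A) : Prop :=
  DependsOn E σ μ ∧
  ∀ pre s, ∃ v : X → Bool,
    σ.next pre s = {t | ∃ a : A → Act, (∀ i, a i ∈ enT E (Pt i) θ v s) ∧ E.tr s a t}

inductive InfoMode : Type | pi | ii

inductive RecallMode : Type | pr | ir

/-- The four memory definitions `μ^{a,b}` for information mode `a` and
recall mode `b`. -/
def memOf (E : Env S P A Act Obs) : InfoMode → RecallMode → MemoryDef S A
  | .pi, .pr => ⟨fun _ => List S × S, fun _ pre s => (pre, s)⟩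
  | .pi, .ir => ⟨fun _ => S, fun _ _ s => s⟩
  | .ii, .pr => ⟨fun _ => List Obs × Obs, fun i pre s => (pre.map (E.obs i), E.obs i s)⟩
  | .ii, .ir => ⟨fun _ => Obs, fun i _ s => E.obs i s⟩

/-- `Σ^{a,b,sc}(Pt, θ, E)` : the strategies that depend on `μ^{a,b}` and are
substitution consistent with respect to `Pt`, `θ` and `μ^{a,b}`. -/
def SigmaSC (E : Env S P A Act Obs) (Pt : A → ProtoT P X Act)
    (θ : X → Option (BForm P)) (a : InfoMode) (b : RecallMode) : Set (Strategy E) :=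
  {σ | SubstConsistent E Pt θ σ (memOf E a b)}

/-- `Σ^{a,b,nsc}(Pt, θ, E)` : the strategies that depend on `μ^{a,b}`
(no substitution-consistency requirement). -/
def SigmaNSC (E : Env S P A Act Obs) (a : InfoMode) (b : RecallMode) : Set (Strategy E) :=
  {σ | DependsOn E σ (memOf E a b)}

/-- The runs of the interpreted system `𝓘(Σ, E)` generated by a set `Σ` of
strategies: each run uses a fixed strategy of `Σ`, encoded in the state. -/
def stratRuns (E : Env S P A Act Obs) (Strats : Set (Strategy E)) :
    Set (ℕ → S × Strategy E) :=
  {r | ∃ σ ∈ Strats, ∃ sq : ℕ → S,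
    (∀ n, r n = (sq n, σ)) ∧ sq 0 ∈ E.init ∧
    ∀ n, sq (n + 1) ∈ σ.next ((List.range n).map sq) (sq n)}

/-- The interpreted system `𝓘(Σ, E)`: global states `S × Σ`, observational
indistinguishability and interpretation via the state component. -/
def stratIS (E : Env S P A Act Obs) (Strats : Set (Strategy E)) :
    IS (S × Strategy E) P A where
  runs := stratRuns E Strats
  sim := fun i p q => E.obs i (p.1 p.2).1 = E.obs i (q.1 q.2).1
  intp := fun gs => E.intp gs.1
  sim_refl := fun _ _ _ _ => rfl
  sim_symm := fun _ _ _ _ _ h => h.symm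
  sim_trans := fun _ _ _ _ _ _ _ h h' => h.trans h'

/-- `α` is an action of agent `i` allowed by the top strategy at a state `s`:
either some clause of the template `P_iθ` with action `α` has its guard
satisfiable relative to `π(s)` (for some truth-value assignment to the
variables on which `θ` is undefined), or `α = skip` and the guard of the
implicit `skip` clause (the conjunction of the negations of all other guards)
is satisfiable relative to `π(s)`. -/
def TopEnabled (E : Env S P A Act Obs) (Pi : ProtoT P X Act)
    (θ : X → Option (BForm P)) (s : S) (α : Act) : Prop :=
  (∃ c ∈ Pi, c.2 = α ∧ ∃ v : X → Bool, evalT (E.intp s) θ v c.1) ∨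
  (α = E.skip ∧ ∃ v : X → Bool, ∀ c ∈ Pi, ¬ evalT (E.intp s) θ v c.1)

/-- The value of the top strategy `σ^⊤_{E,Pθ}` on a sequence ending in `s`:
all states reachable from `s` by a joint action each of whose components is
allowed by the corresponding protocol template at `s`. -/
def topNext (E : Env S P A Act Obs) (Pt : A → ProtoT P X Act)
    (θ : X → Option (BForm P)) (s : S) : Set S :=
  {t | ∃ a : A → Act, (∀ i, a i ∈ E.acts i) ∧ E.tr s a t ∧
       ∀ i, TopEnabled E (Pt i) θ s (a i)}

end EpiSyn
namespace EpiSyn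

/-! ### The environment of Example 4 -/

/-- States `s0`, `s1`, `s2`. -/
inductive TSt : Type | s0 | s1 | s2
  deriving DecidableEq

instance instFintypeTSt : Fintype TSt :=
  ⟨{TSt.s0, TSt.s1, TSt.s2}, fun x => by cases x <;> simp⟩

/-- Actions `a`, `b`, `skip` of the single agent. -/
inductive TAc : Type | a | b | skip
  deriving DecidableEq

instance instFintypeTAc : Fintype TAc :=
  ⟨{TAc.a, TAc.b, TAc.skip}, fun x => by cases x <;> simp⟩

/-- The transition relation: `s0 →^a s1`, `s0 →^b s2`, `s1 →^{a,b} s1`,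
`s2 →^{a,b} s2`, and `s →^{skip} s` for every `s`. -/
def tTr : TSt → (Unit → TAc) → TSt → Prop
  | .s0, α, t => (α () = .a ∧ t = .s1) ∨ (α () = .b ∧ t = .s2) ∨
      (α () = .skip ∧ t = .s0)
  | .s1, _, t => t = .s1
  | .s2, _, t => t = .s2

instance : ∀ s α t, Decidable (tTr s α t) := fun s α t => by
  cases s <;> dsimp [tTr] <;> infer_instance

/-- The single-agent environment with initial state `s0`, actions
`{a, b, skip}`, full observation of the state, and no atomic propositions. -/
def tEnv : Env TSt Empty Unit TAc TSt where
  init := {TSt.s0}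
  acts := fun _ => Set.univ
  skip := TAc.skip
  skip_mem := fun _ => Set.mem_univ _
  tr := tTr
  serial := fun s α _ =>
    (by decide : ∀ (s : TSt) (α : Unit → TAc), ∃ t, tTr s α t) s α
  skip_loop := by decide
  obs := fun _ s => s
  intp := fun _ => ∅

/-- The protocol template `do x → a [] ¬x → b od` for the single agent,
with a single template variable `x`. -/
def tTemplate : Unit → ProtoT Empty Unit TAc := fun _ =>
  [ (BForm.atom (Sum.inr ()), TAc.a),
    (BForm.neg (BForm.atom (Sum.inr ())), TAc.b) ]

/-- The empty partial substitution. -/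
def tTheta : Unit → Option (BForm Empty) := fun _ => none

/-- The maximally nondeterministic (top) strategy `σ_⊤`, allowing any action
at any time: `σ_⊤(s₀…s_k) = {t : s_k →^α t for some action α}`. -/
def sigmaTop : Strategy tEnv where
  next := fun _ s => {t | ∃ α : Unit → TAc, tEnv.tr s α t}
  nonemp := fun _ s =>
    ⟨s, ⟨fun _ => TAc.skip,
      (by decide : ∀ s : TSt, tTr s (fun _ => TAc.skip) s) s⟩⟩
  tr_ok := fun _ s t ht => by
    obtain ⟨α, hα⟩ := ht
    exact ⟨α, fun _ => Set.mem_univ _, hα⟩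

/-- Example 3 of the paper. In this environment, with the
protocol template `do x → a [] ¬x → b od` and the empty substitution, the
top strategy `σ_⊤` is not substitution consistent with respect to any memory
definition `μ`. -/
theorem sigmaTop_not_substitution_consistent :
    ∀ μ : MemoryDef TSt Unit,
      ¬ SubstConsistent tEnv tTemplate tTheta sigmaTop μ := by
  rintro μ ⟨-, hsc⟩
  obtain ⟨v, hv⟩ := hsc [] TSt.s0
  have h1 : TSt.s1 ∈ sigmaTop.next [] TSt.s0 :=
    ⟨fun _ => TAc.a, Or.inl ⟨rfl, rfl⟩⟩
  have h2 : TSt.s2 ∈ sigmaTop.next [] TSt.s0 :=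
    ⟨fun _ => TAc.b, Or.inr (Or.inl ⟨rfl, rfl⟩)⟩
  rw [hv] at h1 h2
  obtain ⟨a1, ha1, ht1⟩ := h1
  obtain ⟨a2, ha2, ht2⟩ := h2
  have e1 : a1 () = TAc.a := by
    rcases ht1 with ⟨h, -⟩ | ⟨-, h⟩ | ⟨-, h⟩ <;> first | exact h | cases h
  have e2 : a2 () = TAc.b := by
    rcases ht2 with ⟨-, h⟩ | ⟨h, -⟩ | ⟨-, h⟩ <;> first | exact h | cases h
  have m1 := ha1 ()
  have m2 := ha2 ()
  rw [e1] at m1; rw [e2] at m2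
  simp only [enT, tTemplate, tTheta, evalT, Set.mem_setOf_eq,
    List.mem_cons, List.not_mem_nil] at m1 m2
  cases hvv : v () with
  | true =>
      rcases m2 with ⟨c, hc, hca, hce⟩ | ⟨hsk, -⟩
      · rcases hc with rfl | rfl | hc
        · cases hca
        · simp [evalT, tTheta, hvv] at hce
        · cases hc
      · cases hsk
  | false =>
      rcases m1 with ⟨c, hc, hca, hce⟩ | ⟨hsk, -⟩
      · rcases hc with rfl | rfl | hc
        · simp [evalT, tTheta, hvv] at hce
        · cases hca
        · cases hc
      · cases hsk

end EpiSyn
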